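/- Let G be a finite group, 𝓕 a family of subgroups closed under conjugation and taking subgroups, R a commutative ring with 1, and N a normal subgroup of G with N ∈ 𝓕. For every G-set X one has Def^G_{G/N} R[X] ≅ R[X^N] as RΓ_{G/N}-modules, where the N-fixed-point set X^N is regarded as a G/N-set. In particular, if H ∈ 𝓕 implies HN ∈ 𝓕, then Def^G_{G/N} sends projective RΓ_G-modules to projective RΓ_{G/N}-modules. -/

import Mathlib

open CategoryTheory CategoryTheory.Limits Opposite

/-! Core: orbit category over a family of subgroups, modules over it,
chain complexes, dimension functions, homology spheres. -/

/-- The conjugate subgroup `g K g⁻¹`. -/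
def conjSub {G : Type} [Group G] (g : G) (K : Subgroup G) : Subgroup G :=
  K.map (MulAut.conj g).toMonoidHom

/-- A family of subgroups of `G`, closed under conjugation and under taking subgroups. -/
structure SubgroupFamily (G : Type) [Group G] : Type where
  mem : Subgroup G → Prop
  conj_mem : ∀ (g : G) (K : Subgroup G), mem K → mem (conjSub g K)
  le_mem : ∀ (H K : Subgroup G), H ≤ K → mem K → mem H

/-- `(H) ≤ (K)` : some conjugate of `H` is contained in `K`, i.e. `g⁻¹ H g ≤ K` for some `g`. -/
def ConjLE {G : Type} [Group G] (H K : Subgroup G) : Prop := ∃ g : G, H ≤ conjSub g K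

/-- A conjugation-invariant (super class) function. -/
def ConjInv {G : Type} [Group G] (n : Subgroup G → ℤ) : Prop :=
  ∀ (g : G) (K : Subgroup G), n (conjSub g K) = n K

/-- Monotone super class function: `n(H) ≥ n(K)` whenever `(H) ≤ (K)`. -/
def MonotoneConj {G : Type} [Group G] (n : Subgroup G → ℤ) : Prop :=
  ∀ H K : Subgroup G, ConjLE H K → n K ≤ n H

/-- Objects of the orbit category `Or_𝓕 G`: orbits `G/K` with `K ∈ 𝓕`. -/
def OrbitObj {G : Type} [Group G] (F : SubgroupFamily G) : Type := {K : Subgroup G // F.mem K}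

/-- The orbit category: morphisms `G/K → G/L` are the `G`-equivariant maps. -/
instance {G : Type} [Group G] (F : SubgroupFamily G) : Category (OrbitObj F) where
  Hom K L := (G ⧸ K.1) →[G] (G ⧸ L.1)
  id K := MulActionHom.id G
  comp f g := g.comp f

/-- The category of `RΓ_G`-modules: contravariant functors from the orbit
category to `R`-modules. -/
abbrev OrbitMod (R : Type) [CommRing R] {G : Type} [Group G] (F : SubgroupFamily G) :=
  (OrbitObj F)ᵒᵖ ⥤ ModuleCat.{0} R

variable {G : Type} [Group G] {R : Type} [CommRing R] {F : SubgroupFamily G}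

/-- The free `RΓ_G`-module `R[G/H^?]`, with value the free `R`-module on
`Map_G(G/K, G/H)` at the object `G/K`. -/
noncomputable def freeAt (R : Type) [CommRing R] {G : Type} [Group G] {F : SubgroupFamily G}
    (H : OrbitObj F) : OrbitMod R F where
  obj K := ModuleCat.of R ((K.unop ⟶ H) →₀ R)
  map f := ModuleCat.ofHom (Finsupp.lmapDomain R R (fun u => f.unop ≫ u))
  map_id K := by
    apply ModuleCat.hom_ext
    simp only [unop_id, Category.id_comp]
    exact Finsupp.lmapDomain_id R R
  map_comp f g := by
    apply ModuleCat.hom_ext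
    simp only [unop_comp, Category.assoc]
    exact Finsupp.lmapDomain_comp R R _ _

/-- A free `RΓ_G`-module: a direct sum of modules `R[G/H^?]`, `H ∈ 𝓕`. -/
def IsFreeMod (M : OrbitMod R F) : Prop :=
  ∃ (ι : Type) (b : ι → OrbitObj F), Nonempty (M ≅ ∐ (fun i => freeAt R (b i)))

/-- A finitely generated `RΓ_G`-module: admits an epimorphism from a
finitely generated free module. -/
def IsFGMod (M : OrbitMod R F) : Prop :=
  ∃ (ι : Type) (_ : Fintype ι) (b : ι → OrbitObj F)
    (π : (∐ (fun i => freeAt R (b i))) ⟶ M), Epi π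

/-- A projective `RΓ_G`-module: a direct summand of a free module. -/
def IsProjMod (M : OrbitMod R F) : Prop :=
  ∃ (Fr : OrbitMod R F), IsFreeMod Fr ∧ ∃ (s : M ⟶ Fr) (r : Fr ⟶ M), s ≫ r = 𝟙 M

/-- Chain complexes of `RΓ_G`-modules (non-negatively graded). -/
abbrev OrbitComplex (R : Type) [CommRing R] {G : Type} [Group G] (F : SubgroupFamily G) :=
  ChainComplex (OrbitMod R F) ℕ

/-- The chain complex `C` vanishes at the object `G/K` in degree `i`. -/
def IsZeroAt (C : OrbitComplex R F) (K : OrbitObj F) (i : ℕ) : Prop :=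
  Subsingleton ((C.X i).obj (op K))

/-- The chain complex `C` is finite-dimensional: `C_i = 0` for all large `i`. -/
def IsFiniteDimC (C : OrbitComplex R F) : Prop :=
  ∃ n : ℕ, ∀ i : ℕ, n < i → ∀ K : OrbitObj F, IsZeroAt C K i

/-- The chain complex `C` is finite: finite-dimensional with finitely
generated chain modules. -/
def IsFiniteC (C : OrbitComplex R F) : Prop :=
  IsFiniteDimC C ∧ ∀ i : ℕ, IsFGMod (C.X i)

/-- `dim C(K)`: the largest `d` with `C_d(K) ≠ 0` (or `-1` for the zero complex). -/
noncomputable def dimAt (C : OrbitComplex R F) (K : OrbitObj F) : ℤ :=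
  sSup (insert (-1 : ℤ) {d : ℤ | ∃ i : ℕ, (i : ℤ) = d ∧ ¬ IsZeroAt C K i})

/-- The dimension function `Dim C : S(G) → ℤ`, with value `-1` outside `𝓕`. -/
noncomputable def DimFun (C : OrbitComplex R F) : Subgroup G → ℤ := fun H =>
  open scoped Classical in
  if h : F.mem H then dimAt C ⟨H, h⟩ else -1

/-- The augmented complex `⋯ → C₁ → C₀ → M → 0` (with `M` placed in degree `0`,
i.e. the whole complex shifted up by one). -/
noncomputable def augment {V : Type 1} [Category.{0} V] [Abelian V]
    (C : ChainComplex V ℕ) (M : V) (π : C.X 0 ⟶ M) (h : C.d 1 0 ≫ π = 0) :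
    ChainComplex V ℕ :=
  ChainComplex.of
    (fun j => match j with
      | 0 => M
      | (i+1) => C.X i)
    (fun j => match j with
      | 0 => π
      | (i+1) => C.d (i+1) i)
    (fun j => match j with
      | 0 => h
      | (i+1) => C.d_comp_d (i+2) (i+1) i)

/-- The constant coefficient system `R̲`. -/
noncomputable def constR (R : Type) [CommRing R] {G : Type} [Group G] (F : SubgroupFamily G) :
    OrbitMod R F :=
  (Functor.const (OrbitObj F)ᵒᵖ).obj (ModuleCat.of R R)

/-- Evaluation of a chain complex over `RΓ_G` at the object `G/K`. -/
noncomputable def evalC (C : OrbitComplex R F) (K : OrbitObj F) :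
    ChainComplex (ModuleCat.{0} R) ℕ where
  X i := (C.X i).obj (op K)
  d i j := (C.d i j).app (op K)
  shape i j hij := by rw [C.shape i j hij]; rfl
  d_comp_d' i j k _ _ := by
    rw [← NatTrans.comp_app, C.d_comp_d]; rfl

/-- The augmented complex of `C(K)` (with `R` in degree `-1`, shifted up by one). -/
noncomputable def augC (C : OrbitComplex R F) (ε : C.X 0 ⟶ constR R F)
    (h : C.d 1 0 ≫ ε = 0) (K : OrbitObj F) : ChainComplex (ModuleCat.{0} R) ℕ :=
  augment (evalC C K) (ModuleCat.of R R) (ε.app (op K))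
    (by show (C.d 1 0).app (op K) ≫ ε.app (op K) = 0
        rw [show (C.d 1 0).app (op K) ≫ ε.app (op K) = (C.d 1 0 ≫ ε).app (op K) from rfl, h]; rfl)

/-- `C` is an `R`-homology `n`-sphere: there is an augmentation `ε : C₀ → R̲`
such that for every `K ∈ 𝓕` the reduced homology of `C(K)` is that of the
sphere `S^{n(K)}` with coefficients in `R`.  (The homology of the augmented
complex — shifted up by one — is `R` in degree `n(K)+1` and zero elsewhere.) -/
noncomputable def IsHomologySphere (C : OrbitComplex R F) (n : Subgroup G → ℤ) : Prop :=
  ∃ (ε : C.X 0 ⟶ constR R F) (h : C.d 1 0 ≫ ε = 0),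
    (∀ K : OrbitObj F, (∃ i, ¬ IsZeroAt C K i) → Function.Surjective (ε.app (op K))) ∧
    ∀ (K : OrbitObj F) (j : ℕ),
      (if (j : ℤ) = n K.1 + 1
        then Nonempty ((augC C ε h K).homology j ≅ ModuleCat.of R R)
        else Subsingleton ((augC C ε h K).homology j))

/-- The chain map `C(K) → C(H)` induced by a `G`-map `f : G/H → G/K`. -/
noncomputable def evalMap (C : OrbitComplex R F) {H K : OrbitObj F} (f : H ⟶ K) :
    evalC C K ⟶ evalC C H where
  f i := (C.X i).map f.op
  comm' i j _ := (C.d i j).naturality f.op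

/-- Condition (ii) of an algebraic homotopy representation: if `n(H) = n(K)`,
every `G`-map `f : G/H → G/K` induces an `R`-homology isomorphism `C(K) → C(H)`. -/
noncomputable def CondII (C : OrbitComplex R F) (n : Subgroup G → ℤ) : Prop :=
  ∀ (H K : OrbitObj F) (f : H ⟶ K), n H.1 = n K.1 →
    ∀ i : ℕ, IsIso (HomologicalComplex.homologyMap (evalMap C f) i)

/-- Condition (iii) of an algebraic homotopy representation. -/
def CondIII (F : SubgroupFamily G) (n : Subgroup G → ℤ) : Prop :=
  ∀ H K L : Subgroup G, F.mem H → F.mem K → F.mem L → H ≤ K → H ≤ L →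
    n H = n K → n H = n L → -1 < n H → F.mem (K ⊔ L) ∧ n (K ⊔ L) = n H



variable {G : Type} [Group G]

/-- The `G`-map `G/K → G/L`, `gK ↦ gpL`, defined when `p⁻¹ K p ≤ L`. -/
def orbitMk {K L : Subgroup G} (p : G) (h : ∀ k ∈ K, p⁻¹ * k * p ∈ L) :
    (G ⧸ K) →[G] (G ⧸ L) where
  toFun x := Quotient.liftOn' x (fun g => ((g * p : G) : G ⧸ L)) (by
    intro a b hab
    rw [QuotientGroup.leftRel_apply] at hab
    apply Quotient.sound'
    rw [QuotientGroup.leftRel_apply]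
    have : (a * p)⁻¹ * (b * p) = p⁻¹ * (a⁻¹ * b) * p := by group
    rw [this]
    exact h _ hab)
  map_smul' g x := by
    induction x using QuotientGroup.induction_on with
    | H a => show (((g * a) * p : G) : G ⧸ L) = g • ((a * p : G) : G ⧸ L)
             rw [mul_assoc]; rfl

@[simp] lemma orbitMk_apply {K L : Subgroup G} (p : G) (h : ∀ k ∈ K, p⁻¹ * k * p ∈ L) (g : G) :
    orbitMk p h (g : G ⧸ K) = ((g * p : G) : G ⧸ L) := rfl

/-- The distinguished representative of a `G`-map `G/K → G/L`. -/
noncomputable def orbitPt {K L : Subgroup G} (φ : (G ⧸ K) →[G] (G ⧸ L)) : G :=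
  (φ ((1 : G) : G ⧸ K)).out

lemma orbitPt_spec {K L : Subgroup G} (φ : (G ⧸ K) →[G] (G ⧸ L)) :
    ((orbitPt φ : G) : G ⧸ L) = φ ((1 : G) : G ⧸ K) := Quotient.out_eq _

lemma orbit_hom_eq {K L : Subgroup G} (φ : (G ⧸ K) →[G] (G ⧸ L)) (g : G) :
    φ ((g : G) : G ⧸ K) = ((g * orbitPt φ : G) : G ⧸ L) := by
  calc φ ((g : G) : G ⧸ K) = φ (g • ((1 : G) : G ⧸ K)) := by
        rw [show g • ((1 : G) : G ⧸ K) = ((g * 1 : G) : G ⧸ K) from rfl, mul_one]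
    _ = g • φ ((1 : G) : G ⧸ K) := map_smul φ g _
    _ = g • ((orbitPt φ : G) : G ⧸ L) := by rw [orbitPt_spec]
    _ = ((g * orbitPt φ : G) : G ⧸ L) := rfl

lemma orbit_hom_mem {K L : Subgroup G} (φ : (G ⧸ K) →[G] (G ⧸ L)) :
    ∀ k ∈ K, (orbitPt φ)⁻¹ * k * orbitPt φ ∈ L := by
  intro k hk
  have h1 : ((k : G) : G ⧸ K) = ((1 : G) : G ⧸ K) := by
    rw [QuotientGroup.eq]; simpa using K.inv_mem hk
  have h2 : ((k * orbitPt φ : G) : G ⧸ L) = ((1 * orbitPt φ : G) : G ⧸ L) := by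
    rw [← orbit_hom_eq, ← orbit_hom_eq, h1]
  rw [QuotientGroup.eq] at h2
  have : (k * orbitPt φ)⁻¹ * (1 * orbitPt φ) = ((orbitPt φ)⁻¹ * k * orbitPt φ)⁻¹ := by group
  rw [this] at h2
  simpa using L.inv_mem h2

-- extensionality for maps out of quotients
lemma orbit_hom_ext {K L : Subgroup G} (φ ψ : (G ⧸ K) →[G] (G ⧸ L))
    (h : ∀ g : G, φ ((g : G) : G ⧸ K) = ψ ((g : G) : G ⧸ K)) : φ = ψ := by
  ext x
  induction x using QuotientGroup.induction_on with
  | H a => exact h a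

/-- The family `𝓕_P = {K ∈ 𝓕 : K ≤ P}` of subgroups of `P` induced by a family
of subgroups of `G`. -/
def SubFamily (F : SubgroupFamily G) (P : Subgroup G) : SubgroupFamily ↥P where
  mem K := F.mem (K.map P.subtype)
  conj_mem g K hK := by
    show F.mem ((conjSub g K).map P.subtype)
    have h : (conjSub g K).map P.subtype = conjSub (g : G) (K.map P.subtype) := by
      unfold conjSub
      rw [Subgroup.map_map, Subgroup.map_map]
      congr 1
    rw [h]
    exact F.conj_mem _ _ hK
  le_mem H K h hK := F.le_mem _ _ (Subgroup.map_mono h) hK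

/-- The `G`-map `G/K → G/L` induced by a `P`-map `P/K → P/L`, for `K, L ≤ P`. -/
noncomputable def inducedSubMap (P : Subgroup G) {K L : Subgroup ↥P}
    (φ : (↥P ⧸ K) →[↥P] (↥P ⧸ L)) :
    (G ⧸ K.map P.subtype) →[G] (G ⧸ L.map P.subtype) :=
  orbitMk ((orbitPt φ : ↥P) : G) (by
    intro k hk
    obtain ⟨k₀, hk₀, rfl⟩ := Subgroup.mem_map.mp hk
    exact Subgroup.mem_map.mpr ⟨_, orbit_hom_mem φ k₀ hk₀, by simp⟩)

lemma inducedSubMap_id (P : Subgroup G) (K : Subgroup ↥P) :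
    inducedSubMap P (MulActionHom.id ↥P (X := ↥P ⧸ K)) = MulActionHom.id G := by
  apply orbit_hom_ext
  intro g
  have hq : (orbitPt (MulActionHom.id ↥P (X := ↥P ⧸ K))) ∈ K := by
    have h0 := orbitPt_spec (MulActionHom.id ↥P (X := ↥P ⧸ K))
    have h1 : (MulActionHom.id ↥P (X := ↥P ⧸ K)) (((1 : ↥P) : ↥P ⧸ K)) =
        ((1 : ↥P) : ↥P ⧸ K) := rfl
    rw [h1, QuotientGroup.eq] at h0
    simpa using K.inv_mem h0
  show ((g * ((orbitPt (MulActionHom.id ↥P (X := ↥P ⧸ K)) : ↥P) : G) : G) :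
      G ⧸ K.map P.subtype) = ((g : G) : G ⧸ K.map P.subtype)
  rw [QuotientGroup.eq]
  have h2 : (g * ((orbitPt (MulActionHom.id ↥P (X := ↥P ⧸ K)) : ↥P) : G))⁻¹ * g =
      (((orbitPt (MulActionHom.id ↥P (X := ↥P ⧸ K)) : ↥P) : G))⁻¹ := by group
  rw [h2]
  exact (K.map P.subtype).inv_mem (Subgroup.mem_map.mpr ⟨_, hq, rfl⟩)

lemma inducedSubMap_comp (P : Subgroup G) {K L M : Subgroup ↥P}
    (φ : (↥P ⧸ K) →[↥P] (↥P ⧸ L)) (ψ : (↥P ⧸ L) →[↥P] (↥P ⧸ M)) :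
    inducedSubMap P (ψ.comp φ) = (inducedSubMap P ψ).comp (inducedSubMap P φ) := by
  apply orbit_hom_ext
  intro g
  have hr : (orbitPt (ψ.comp φ))⁻¹ * (orbitPt φ * orbitPt ψ) ∈ M := by
    have h1 : ((orbitPt (ψ.comp φ) : ↥P) : ↥P ⧸ M) = ((orbitPt φ * orbitPt ψ : ↥P) : ↥P ⧸ M) := by
      rw [orbitPt_spec]
      show ψ (φ ((1 : ↥P) : ↥P ⧸ K)) = _
      rw [show φ (((1 : ↥P) : ↥P ⧸ K)) = ((orbitPt φ : ↥P) : ↥P ⧸ L) from (orbitPt_spec φ).symm,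
        orbit_hom_eq ψ (orbitPt φ)]
    exact QuotientGroup.eq.mp h1
  show ((g * ((orbitPt (ψ.comp φ) : ↥P) : G) : G) : G ⧸ M.map P.subtype) =
    (inducedSubMap P ψ) ((inducedSubMap P φ) ((g : G) : G ⧸ K.map P.subtype))
  unfold inducedSubMap
  rw [orbitMk_apply, orbitMk_apply, QuotientGroup.eq]
  refine Subgroup.mem_map.mpr ⟨_, hr, ?_⟩
  simp only [Subgroup.coe_subtype]
  push_cast
  group

/-- The functor `Γ_P → Γ_G` sending `P/K` to `G/K`; restriction of modules
along (the opposite of) this functor is the restriction functor `res^G_P`. -/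
noncomputable def subOrbitFunctor (F : SubgroupFamily G) (P : Subgroup G) :
    OrbitObj (SubFamily F P) ⥤ OrbitObj F where
  obj K := ⟨K.1.map P.subtype, K.2⟩
  map {K L} φ := inducedSubMap P φ
  map_id K := inducedSubMap_id P K.1
  map_comp {K L M} φ ψ := inducedSubMap_comp P φ ψ

/-! ### The orbit-category functor `Γ_{G/N} → Γ_G` induced by a quotient `G → G/N` -/

/-- The `G`-map `G/K' → G/L'` (where `K' = comap(K̄)`, `L' = comap(L̄)`) induced by a
`G/N`-map `(G/N)/K̄ → (G/N)/L̄`. -/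
noncomputable def inducedQuotMap (N : Subgroup G) [N.Normal] {Kb Lb : Subgroup (G ⧸ N)}
    (φ : ((G ⧸ N) ⧸ Kb) →[G ⧸ N] ((G ⧸ N) ⧸ Lb)) :
    (G ⧸ Kb.comap (QuotientGroup.mk' N)) →[G] (G ⧸ Lb.comap (QuotientGroup.mk' N)) :=
  orbitMk ((orbitPt φ).out) (by
    intro k hk
    rw [Subgroup.mem_comap]
    have hout : (QuotientGroup.mk' N) (orbitPt φ).out = orbitPt φ := by
      rw [QuotientGroup.mk'_apply]; exact Quotient.out_eq _
    rw [map_mul, map_mul, map_inv, hout]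
    exact orbit_hom_mem φ _ (Subgroup.mem_comap.mp hk))

lemma inducedQuotMap_id (N : Subgroup G) [N.Normal] (Kb : Subgroup (G ⧸ N)) :
    inducedQuotMap N (MulActionHom.id (G ⧸ N) (X := (G ⧸ N) ⧸ Kb)) = MulActionHom.id G := by
  apply orbit_hom_ext
  intro g
  have hout : (QuotientGroup.mk' N) (orbitPt (MulActionHom.id (G ⧸ N) (X := (G ⧸ N) ⧸ Kb))).out
      = orbitPt (MulActionHom.id (G ⧸ N) (X := (G ⧸ N) ⧸ Kb)) := by
    rw [QuotientGroup.mk'_apply]; exact Quotient.out_eq _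
  have hq : (orbitPt (MulActionHom.id (G ⧸ N) (X := (G ⧸ N) ⧸ Kb))).out ∈
      Kb.comap (QuotientGroup.mk' N) := by
    rw [Subgroup.mem_comap, hout]
    have h0 := orbitPt_spec (MulActionHom.id (G ⧸ N) (X := (G ⧸ N) ⧸ Kb))
    have h1 : (MulActionHom.id (G ⧸ N) (X := (G ⧸ N) ⧸ Kb)) ((1 : G ⧸ N) : (G ⧸ N) ⧸ Kb) =
        ((1 : G ⧸ N) : (G ⧸ N) ⧸ Kb) := rfl
    rw [h1, QuotientGroup.eq] at h0
    simpa using Kb.inv_mem h0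
  show ((g * (orbitPt (MulActionHom.id (G ⧸ N) (X := (G ⧸ N) ⧸ Kb))).out : G) :
      G ⧸ Kb.comap (QuotientGroup.mk' N)) = ((g : G) : G ⧸ Kb.comap (QuotientGroup.mk' N))
  rw [QuotientGroup.eq]
  have h2 : (g * (orbitPt (MulActionHom.id (G ⧸ N) (X := (G ⧸ N) ⧸ Kb))).out)⁻¹ * g =
      ((orbitPt (MulActionHom.id (G ⧸ N) (X := (G ⧸ N) ⧸ Kb))).out)⁻¹ := by group
  rw [h2]
  exact (Kb.comap (QuotientGroup.mk' N)).inv_mem hq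

lemma inducedQuotMap_comp (N : Subgroup G) [N.Normal] {Kb Lb Mb : Subgroup (G ⧸ N)}
    (φ : ((G ⧸ N) ⧸ Kb) →[G ⧸ N] ((G ⧸ N) ⧸ Lb))
    (ψ : ((G ⧸ N) ⧸ Lb) →[G ⧸ N] ((G ⧸ N) ⧸ Mb)) :
    inducedQuotMap N (ψ.comp φ) = (inducedQuotMap N ψ).comp (inducedQuotMap N φ) := by
  apply orbit_hom_ext
  intro g
  have hr : (orbitPt (ψ.comp φ))⁻¹ * (orbitPt φ * orbitPt ψ) ∈ Mb := by
    have h1 : ((orbitPt (ψ.comp φ) : G ⧸ N) : (G ⧸ N) ⧸ Mb)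
        = ((orbitPt φ * orbitPt ψ : G ⧸ N) : (G ⧸ N) ⧸ Mb) := by
      rw [orbitPt_spec]
      show ψ (φ ((1 : G ⧸ N) : (G ⧸ N) ⧸ Kb)) = _
      rw [show φ ((1 : G ⧸ N) : (G ⧸ N) ⧸ Kb) = ((orbitPt φ : G ⧸ N) : (G ⧸ N) ⧸ Lb) from
            (orbitPt_spec φ).symm,
        orbit_hom_eq ψ (orbitPt φ)]
    exact QuotientGroup.eq.mp h1
  show ((g * (orbitPt (ψ.comp φ)).out : G) : G ⧸ Mb.comap (QuotientGroup.mk' N)) =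
    (inducedQuotMap N ψ) ((inducedQuotMap N φ) ((g : G) : G ⧸ Kb.comap (QuotientGroup.mk' N)))
  unfold inducedQuotMap
  rw [orbitMk_apply, orbitMk_apply, QuotientGroup.eq]
  rw [Subgroup.mem_comap]
  have hout : ∀ {Ab Bb : Subgroup (G ⧸ N)} (χ : ((G ⧸ N) ⧸ Ab) →[G ⧸ N] ((G ⧸ N) ⧸ Bb)),
      (QuotientGroup.mk' N) (orbitPt χ).out = orbitPt χ := fun χ => by
    rw [QuotientGroup.mk'_apply]; exact Quotient.out_eq _
  have : (QuotientGroup.mk' N) ((g * (orbitPt (ψ.comp φ)).out)⁻¹ * (g * (orbitPt φ).out * (orbitPt ψ).out))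
      = (orbitPt (ψ.comp φ))⁻¹ * (orbitPt φ * orbitPt ψ) := by
    rw [map_mul, map_inv, map_mul, map_mul, map_mul, hout, hout, hout]
    group
  rw [this]
  exact hr

/-- The functor `Γ_{G/N} → Γ_G` regarding an orbit of `G/N` as a `G`-set via the
quotient map `G → G/N`.  Restriction of modules along (the opposite of) this
functor is the deflation functor `Def^G_{G/N}`. -/
noncomputable def quotOrbitFunctor (F : SubgroupFamily G) (N : Subgroup G) [N.Normal]
    (FQ : SubgroupFamily (G ⧸ N))
    (hFQ : ∀ Kb : Subgroup (G ⧸ N), FQ.mem Kb ↔ F.mem (Kb.comap (QuotientGroup.mk' N))) :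
    OrbitObj FQ ⥤ OrbitObj F where
  obj Kb := ⟨Kb.1.comap (QuotientGroup.mk' N), (hFQ _).mp Kb.2⟩
  map {Kb Lb} φ := inducedQuotMap N φ
  map_id Kb := inducedQuotMap_id N Kb.1
  map_comp {Kb Lb Mb} φ ψ := inducedQuotMap_comp N φ ψ

/-- The deflation functor `Def^G_{G/N}`: restriction of modules along
`Γ_{G/N} → Γ_G`. -/
noncomputable def defMod (R : Type) [CommRing R] {G : Type} [Group G] (F : SubgroupFamily G)
    (N : Subgroup G) [N.Normal] (FQ : SubgroupFamily (G ⧸ N))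
    (hFQ : ∀ Kb : Subgroup (G ⧸ N), FQ.mem Kb ↔ F.mem (Kb.comap (QuotientGroup.mk' N))) :
    OrbitMod R F ⥤ OrbitMod R FQ :=
  (Functor.whiskeringLeft _ _ _).obj (quotOrbitFunctor F N FQ hFQ).op

/-! ### The module `R[X]` of a `G`-set `X` -/

/-- The `RΓ_G`-module `R[X]` of a `G`-set `X`, with value the free `R`-module
on `X^K ≅ Map_G(G/K, X)` at `G/K`. -/
noncomputable def gsetMod (R : Type) [CommRing R] {G : Type} [Group G] (F : SubgroupFamily G)
    (X : Type) [MulAction G X] : OrbitMod R F where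
  obj V := ModuleCat.of R (((G ⧸ (V.unop).1) →[G] X) →₀ R)
  map {V W} f := ModuleCat.ofHom (Finsupp.lmapDomain R R (fun u => u.comp f.unop))
  map_id V := ModuleCat.hom_ext <|
    (congrArg (Finsupp.lmapDomain R R)
      (funext fun (u : (G ⧸ (V.unop).1) →[G] X) => MulActionHom.comp_id u)).trans
      (Finsupp.lmapDomain_id R R)
  map_comp {V W U} f g := by
    have h : (fun (u : (G ⧸ (V.unop).1) →[G] X) => u.comp ((f ≫ g).unop)) =
        ((fun (u : (G ⧸ (W.unop).1) →[G] X) => u.comp g.unop) ∘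
          (fun (u : (G ⧸ (V.unop).1) →[G] X) => u.comp f.unop)) :=
      funext fun u => MulActionHom.comp_assoc u f.unop g.unop
    exact ModuleCat.hom_ext <| (congrArg (Finsupp.lmapDomain R R) h).trans (Finsupp.lmapDomain_comp R R _ _)

/-- A `G/N`-set regarded as a `G`-set via the quotient map `G → G/N`. -/
def InflatedSet {G : Type} [Group G] (N : Subgroup G) [N.Normal] (X : Type) : Type := X

instance {G : Type} [Group G] (N : Subgroup G) [N.Normal] (X : Type)
    [MulAction (G ⧸ N) X] : MulAction G (InflatedSet N X) :=
  MulAction.compHom X (QuotientGroup.mk' N)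

/-- The `G/N`-action on the `N`-fixed points of a `G`-set. -/
noncomputable instance fixedPointsQuotientAction {G : Type} [Group G] (N : Subgroup G)
    [hN : N.Normal] (X : Type) [MulAction G X] :
    MulAction (G ⧸ N) (MulAction.fixedPoints ↥N X) where
  smul q x := Quotient.liftOn' q
    (fun g => (⟨g • (x : X), by
      rw [MulAction.mem_fixedPoints]
      intro n
      have h1 : (n : G) • (g • (x : X)) = g • (((g⁻¹ * n * g : G) : G) • (x : X)) := by
        rw [← mul_smul, ← mul_smul]
        congr 1
        group
      have h2 : ((g⁻¹ * (n : G) * g : G)) • (x : X) = (x : X) := by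
        have hmem : g⁻¹ * (n : G) * g ∈ N := by
          have := hN.conj_mem (n : G) n.2 g⁻¹
          simpa [mul_assoc] using this
        exact x.2 ⟨_, hmem⟩
      show (n : G) • (g • (x : X)) = g • (x : X)
      rw [h1, h2]⟩ : MulAction.fixedPoints ↥N X))
    (by
      intro a b hab
      rw [QuotientGroup.leftRel_apply] at hab
      apply Subtype.ext
      show a • (x : X) = b • (x : X)
      have hx : ((a⁻¹ * b : G)) • (x : X) = (x : X) := x.2 ⟨_, hab⟩
      have hb : b = a * (a⁻¹ * b) := by group
      rw [hb, mul_smul, hx])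
  one_smul x := by
    apply Subtype.ext
    show (1 : G) • (x : X) = (x : X)
    exact one_smul G (x : X)
  mul_smul q r x := by
    induction q using QuotientGroup.induction_on with
    | H a =>
      induction r using QuotientGroup.induction_on with
      | H b =>
        apply Subtype.ext
        show (a * b) • (x : X) = a • (b • (x : X))
        exact mul_smul a b (x : X)

/-! ### Auxiliary material for Statement 6 -/

section Statement6Aux

variable {G : Type} [Group G]

lemma N_le_comap (N : Subgroup G) [N.Normal] (Kb : Subgroup (G ⧸ N)) :
    N ≤ Kb.comap (QuotientGroup.mk' N) := by
  intro n hn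
  rw [Subgroup.mem_comap, QuotientGroup.mk'_apply, (QuotientGroup.eq_one_iff n).mpr hn]
  exact Kb.one_mem

lemma mul_mk_eq {K : Subgroup G} (N : Subgroup G) [hN : N.Normal] (hNK : N ≤ K)
    {n : G} (hn : n ∈ N) (g : G) : ((n * g : G) : G ⧸ K) = ((g : G) : G ⧸ K) := by
  rw [QuotientGroup.eq]
  have h : (n * g)⁻¹ * g = g⁻¹ * n⁻¹ * g := by group
  rw [h]
  have hmem : g⁻¹ * n⁻¹ * g ∈ N := by
    have := hN.conj_mem n⁻¹ (N.inv_mem hn) g⁻¹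
    simpa [mul_assoc] using this
  exact hNK hmem

lemma mk_mem_fixedPoints {K : Subgroup G} (N : Subgroup G) [N.Normal] (hNK : N ≤ K) (g : G) :
    ((g : G) : G ⧸ K) ∈ MulAction.fixedPoints ↥N (G ⧸ K) := by
  rw [MulAction.mem_fixedPoints]
  intro n
  show (n : G) • ((g : G) : G ⧸ K) = ((g : G) : G ⧸ K)
  rw [show (n : G) • ((g : G) : G ⧸ K) = (((n : G) * g : G) : G ⧸ K) from rfl]
  exact mul_mk_eq N hNK n.2 g

lemma apply_mem_fixedPoints {X : Type} [MulAction G X] (N : Subgroup G) [N.Normal]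
    {K : Subgroup G} (hNK : N ≤ K) (u : (G ⧸ K) →[G] X) (y : G ⧸ K) :
    u y ∈ MulAction.fixedPoints ↥N X := by
  rw [MulAction.mem_fixedPoints]
  intro n
  induction y using QuotientGroup.induction_on with
  | H g =>
    calc (n : G) • u ((g : G) : G ⧸ K) = u ((n : G) • ((g : G) : G ⧸ K)) :=
          (map_smul u _ _).symm
      _ = u ((g : G) : G ⧸ K) := by
          rw [show (n : G) • ((g : G) : G ⧸ K) = (((n : G) * g : G) : G ⧸ K) from rfl,
            mul_mk_eq N hNK n.2 g]

lemma fixed_smul_val {X : Type} [MulAction G X] (N : Subgroup G) [N.Normal] (g : G)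
    (x : MulAction.fixedPoints ↥N X) :
    ((((g : G ⧸ N)) • x : MulAction.fixedPoints ↥N X) : X) = g • (x : X) := rfl

/-- The canonical map `G ⧸ comap Kb → (G⧸N) ⧸ Kb`. -/
def toQuot (N : Subgroup G) [N.Normal] (Kb : Subgroup (G ⧸ N))
    (x : G ⧸ Kb.comap (QuotientGroup.mk' N)) : (G ⧸ N) ⧸ Kb :=
  Quotient.liftOn' x (fun g => ((g : G ⧸ N) : (G ⧸ N) ⧸ Kb)) (by
    intro a b hab
    rw [QuotientGroup.leftRel_apply] at hab
    apply Quotient.sound'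
    rw [QuotientGroup.leftRel_apply]
    show ((a : G ⧸ N))⁻¹ * (b : G ⧸ N) ∈ Kb
    rw [← QuotientGroup.mk_inv, ← QuotientGroup.mk_mul]
    have := Subgroup.mem_comap.mp hab
    rwa [QuotientGroup.mk'_apply] at this)

@[simp] lemma toQuot_mk (N : Subgroup G) [N.Normal] (Kb : Subgroup (G ⧸ N)) (g : G) :
    toQuot N Kb ((g : G) : G ⧸ Kb.comap (QuotientGroup.mk' N)) =
      ((g : G ⧸ N) : (G ⧸ N) ⧸ Kb) := rfl

lemma toQuot_smul (N : Subgroup G) [N.Normal] (Kb : Subgroup (G ⧸ N)) (g : G)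
    (x : G ⧸ Kb.comap (QuotientGroup.mk' N)) :
    toQuot N Kb (g • x) = ((g : G ⧸ N)) • toQuot N Kb x := by
  induction x using QuotientGroup.induction_on with
  | H a =>
    show toQuot N Kb ((g * a : G) : G ⧸ Kb.comap (QuotientGroup.mk' N)) =
      ((g : G ⧸ N)) • ((a : G ⧸ N) : (G ⧸ N) ⧸ Kb)
    rw [toQuot_mk]
    rfl

lemma toQuot_bijective (N : Subgroup G) [N.Normal] (Kb : Subgroup (G ⧸ N)) :
    Function.Bijective (toQuot N Kb) := by
  constructor
  · intro x y h
    induction x using QuotientGroup.induction_on with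
    | H a =>
      induction y using QuotientGroup.induction_on with
      | H b =>
        rw [toQuot_mk, toQuot_mk, QuotientGroup.eq] at h
        rw [QuotientGroup.eq]
        apply Subgroup.mem_comap.mpr
        rw [QuotientGroup.mk'_apply, QuotientGroup.mk_mul, QuotientGroup.mk_inv]
        exact h
  · intro q
    induction q using QuotientGroup.induction_on with
    | H gb =>
      induction gb using QuotientGroup.induction_on with
      | H g => exact ⟨((g : G) : G ⧸ Kb.comap (QuotientGroup.mk' N)), rfl⟩

/-- The canonical equivalence `G ⧸ comap Kb ≃ (G⧸N) ⧸ Kb`. -/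
noncomputable def quotEquiv (N : Subgroup G) [N.Normal] (Kb : Subgroup (G ⧸ N)) :
    (G ⧸ Kb.comap (QuotientGroup.mk' N)) ≃ ((G ⧸ N) ⧸ Kb) :=
  Equiv.ofBijective (toQuot N Kb) (toQuot_bijective N Kb)

/-- The equivalence between `G`-maps `G ⧸ comap Kb → X` and `G/N`-maps
`(G⧸N) ⧸ Kb → X^N`. -/
noncomputable def fixHomEquiv (N : Subgroup G) [N.Normal] (Kb : Subgroup (G ⧸ N))
    (X : Type) [MulAction G X] :
    ((G ⧸ Kb.comap (QuotientGroup.mk' N)) →[G] X) ≃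
      (((G ⧸ N) ⧸ Kb) →[G ⧸ N] MulAction.fixedPoints ↥N X) where
  toFun u :=
    { toFun := fun q => ⟨u ((quotEquiv N Kb).symm q),
        apply_mem_fixedPoints N (N_le_comap N Kb) u _⟩
      map_smul' := by
        intro qb q
        induction qb using QuotientGroup.induction_on with
        | H g =>
          apply Subtype.ext
          show u ((quotEquiv N Kb).symm (((g : G ⧸ N)) • q)) =
            g • u ((quotEquiv N Kb).symm q)
          rw [← map_smul u]
          congr 1
          apply (quotEquiv N Kb).injective
          rw [Equiv.apply_symm_apply]
          show ((g : G ⧸ N)) • q = toQuot N Kb (g • (quotEquiv N Kb).symm q)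
          rw [toQuot_smul]
          congr 1
          exact (Equiv.apply_symm_apply (quotEquiv N Kb) q).symm }
  invFun v :=
    { toFun := fun x => ((v (toQuot N Kb x) : MulAction.fixedPoints ↥N X) : X)
      map_smul' := by
        intro g x
        show ((v (toQuot N Kb (g • x)) : MulAction.fixedPoints ↥N X) : X) =
          g • ((v (toQuot N Kb x) : MulAction.fixedPoints ↥N X) : X)
        rw [toQuot_smul, map_smul v, fixed_smul_val] }
  left_inv u := by
    ext x
    show u ((quotEquiv N Kb).symm (toQuot N Kb x)) = u x
    congr 1
    exact Equiv.symm_apply_apply (quotEquiv N Kb) x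
  right_inv v := by
    ext q
    show ((v (toQuot N Kb ((quotEquiv N Kb).symm q)) : MulAction.fixedPoints ↥N X) : X) =
      ((v q : MulAction.fixedPoints ↥N X) : X)
    rw [show toQuot N Kb ((quotEquiv N Kb).symm q) = q from
      Equiv.apply_symm_apply (quotEquiv N Kb) q]

lemma toQuot_inducedQuotMap (N : Subgroup G) [N.Normal] {Kb Lb : Subgroup (G ⧸ N)}
    (φ : ((G ⧸ N) ⧸ Lb) →[G ⧸ N] ((G ⧸ N) ⧸ Kb)) (x : G ⧸ Lb.comap (QuotientGroup.mk' N)) :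
    toQuot N Kb (inducedQuotMap N φ x) = φ (toQuot N Lb x) := by
  induction x using QuotientGroup.induction_on with
  | H g =>
    have hout : (((orbitPt φ).out : G) : G ⧸ N) = orbitPt φ := Quotient.out_eq _
    show toQuot N Kb (inducedQuotMap N φ ((g : G) : G ⧸ Lb.comap (QuotientGroup.mk' N))) =
      φ ((g : G ⧸ N) : (G ⧸ N) ⧸ Lb)
    unfold inducedQuotMap
    rw [orbitMk_apply, toQuot_mk, orbit_hom_eq φ ((g : G ⧸ N))]
    congr 1
    rw [QuotientGroup.mk_mul, hout]

lemma fixHomEquiv_comp (N : Subgroup G) [N.Normal] {Kb Lb : Subgroup (G ⧸ N)}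
    (φ : ((G ⧸ N) ⧸ Lb) →[G ⧸ N] ((G ⧸ N) ⧸ Kb)) (X : Type) [MulAction G X]
    (u : (G ⧸ Kb.comap (QuotientGroup.mk' N)) →[G] X) :
    fixHomEquiv N Lb X (u.comp (inducedQuotMap N φ)) = (fixHomEquiv N Kb X u).comp φ := by
  ext q
  show u (inducedQuotMap N φ ((quotEquiv N Lb).symm q)) = u ((quotEquiv N Kb).symm (φ q))
  congr 1
  apply (quotEquiv N Kb).injective
  rw [Equiv.apply_symm_apply]
  show toQuot N Kb (inducedQuotMap N φ ((quotEquiv N Lb).symm q)) = φ q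
  rw [toQuot_inducedQuotMap]
  rw [show toQuot N Lb ((quotEquiv N Lb).symm q) = q from
    Equiv.apply_symm_apply (quotEquiv N Lb) q]

lemma lmapDomain_domLCongr (R : Type) [CommRing R] {α β α' β' : Type}
    (eα : α ≃ α') (eβ : β ≃ β') (f : α → β) (f' : α' → β')
    (h : ∀ a, eβ (f a) = f' (eα a)) :
    (Finsupp.domLCongr (R := R) (M := R) eβ).toLinearMap.comp (Finsupp.lmapDomain R R f)
      = (Finsupp.lmapDomain R R f').comp
          (Finsupp.domLCongr (R := R) (M := R) eα).toLinearMap := by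
  apply Finsupp.lhom_ext
  intro a b
  simp [Finsupp.lmapDomain_apply, Finsupp.mapDomain_single, h a]

/-- Statement 6, first part: `Def R[X] ≅ R[X^N]`. -/
noncomputable def defGsetIso (R : Type) [CommRing R] (F : SubgroupFamily G)
    (N : Subgroup G) [N.Normal] (FQ : SubgroupFamily (G ⧸ N))
    (hFQ : ∀ Kb : Subgroup (G ⧸ N), FQ.mem Kb ↔ F.mem (Kb.comap (QuotientGroup.mk' N)))
    (X : Type) [MulAction G X] :
    (defMod R F N FQ hFQ).obj (gsetMod R F X) ≅
      gsetMod R FQ (MulAction.fixedPoints ↥N X) :=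
  NatIso.ofComponents
    (fun Kb => (Finsupp.domLCongr (R := R) (M := R)
      (fixHomEquiv N Kb.unop.1 X)).toModuleIso)
    (fun {Kb Lb} f => ModuleCat.hom_ext <|
      lmapDomain_domLCongr R (fixHomEquiv N Kb.unop.1 X) (fixHomEquiv N Lb.unop.1 X)
        (fun u => u.comp (inducedQuotMap N f.unop)) (fun v => v.comp f.unop)
        (fun u => fixHomEquiv_comp N f.unop X u))

end Statement6Aux

section Statement6Aux2

variable {G : Type} [Group G]

/-- The inverse of a bijective equivariant map. -/
noncomputable def mulActionInv {X Y : Type} [MulAction G X] [MulAction G Y]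
    (e : X →[G] Y) (he : Function.Bijective e) : Y →[G] X where
  toFun := (Equiv.ofBijective e he).symm
  map_smul' g y := he.1 (by
    have h1 : e ((Equiv.ofBijective e he).symm (g • y)) = g • y :=
      Equiv.apply_symm_apply (Equiv.ofBijective e he) (g • y)
    have h2 : e ((Equiv.ofBijective e he).symm y) = y :=
      Equiv.apply_symm_apply (Equiv.ofBijective e he) y
    rw [h1, map_smul e, h2]
    rfl)

/-- Post-composition with a bijective equivariant map, as an `Equiv` of hom sets. -/
noncomputable def gsetHomCongr {X Y : Type} [MulAction G X] [MulAction G Y]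
    (e : X →[G] Y) (he : Function.Bijective e) (K : Subgroup G) :
    ((G ⧸ K) →[G] X) ≃ ((G ⧸ K) →[G] Y) where
  toFun u := e.comp u
  invFun w := (mulActionInv e he).comp w
  left_inv u := by
    ext x
    show (Equiv.ofBijective e he).symm (e (u x)) = u x
    exact Equiv.symm_apply_apply (Equiv.ofBijective e he) (u x)
  right_inv w := by
    ext x
    show e ((Equiv.ofBijective e he).symm (w x)) = w x
    exact Equiv.apply_symm_apply (Equiv.ofBijective e he) (w x)

/-- `R[X] ≅ R[Y]` for equivariantly bijective `X`, `Y`. -/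
noncomputable def gsetModCongr (R : Type) [CommRing R] (F : SubgroupFamily G)
    {X Y : Type} [MulAction G X] [MulAction G Y] (e : X →[G] Y)
    (he : Function.Bijective e) : gsetMod R F X ≅ gsetMod R F Y :=
  NatIso.ofComponents
    (fun K => (Finsupp.domLCongr (R := R) (M := R)
      (gsetHomCongr e he K.unop.1)).toModuleIso)
    (fun {K L} f => ModuleCat.hom_ext <|
      lmapDomain_domLCongr R (gsetHomCongr e he K.unop.1) (gsetHomCongr e he L.unop.1)
        (fun u => u.comp f.unop) (fun u => u.comp f.unop)
        (fun u => by ext x; rfl))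

lemma freeAt_eq_gsetMod (R : Type) [CommRing R] {F : SubgroupFamily G} (H : OrbitObj F) :
    freeAt R H = gsetMod R F (G ⧸ H.1) := rfl

/-- The canonical map `G ⧸ H → (G⧸N) ⧸ (H.map mk')`. -/
def qmap (N : Subgroup G) [N.Normal] (Hs : Subgroup G) (x : G ⧸ Hs) :
    (G ⧸ N) ⧸ Hs.map (QuotientGroup.mk' N) :=
  Quotient.liftOn' x (fun g => ((g : G ⧸ N) : (G ⧸ N) ⧸ Hs.map (QuotientGroup.mk' N))) (by
    intro a b hab
    rw [QuotientGroup.leftRel_apply] at hab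
    apply Quotient.sound'
    rw [QuotientGroup.leftRel_apply]
    show ((a : G ⧸ N))⁻¹ * (b : G ⧸ N) ∈ Hs.map (QuotientGroup.mk' N)
    rw [← QuotientGroup.mk_inv, ← QuotientGroup.mk_mul]
    exact Subgroup.mem_map.mpr ⟨a⁻¹ * b, hab, rfl⟩)

@[simp] lemma qmap_mk (N : Subgroup G) [N.Normal] (Hs : Subgroup G) (g : G) :
    qmap N Hs ((g : G) : G ⧸ Hs) = ((g : G ⧸ N) : (G ⧸ N) ⧸ Hs.map (QuotientGroup.mk' N)) := rfl

lemma qmap_smul (N : Subgroup G) [N.Normal] (Hs : Subgroup G) (g : G) (x : G ⧸ Hs) :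
    qmap N Hs (g • x) = ((g : G ⧸ N)) • qmap N Hs x := by
  induction x using QuotientGroup.induction_on with
  | H a =>
    show qmap N Hs ((g * a : G) : G ⧸ Hs) = ((g : G ⧸ N)) • qmap N Hs ((a : G) : G ⧸ Hs)
    rw [qmap_mk, qmap_mk]
    rfl

lemma qmap_injective (N : Subgroup G) [N.Normal] (Hs : Subgroup G) (hNH : N ≤ Hs) :
    Function.Injective (qmap N Hs) := by
  intro x y h
  induction x using QuotientGroup.induction_on with
  | H a =>
    induction y using QuotientGroup.induction_on with
    | H b =>
      rw [qmap_mk, qmap_mk, QuotientGroup.eq] at h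
      rw [QuotientGroup.eq]
      have h2 : ((a⁻¹ * b : G) : G ⧸ N) ∈ Hs.map (QuotientGroup.mk' N) := by
        rw [QuotientGroup.mk_mul, QuotientGroup.mk_inv]; exact h
      have h3 : a⁻¹ * b ∈ (Hs.map (QuotientGroup.mk' N)).comap (QuotientGroup.mk' N) := by
        rw [Subgroup.mem_comap, QuotientGroup.mk'_apply]; exact h2
      rwa [Subgroup.comap_map_eq, QuotientGroup.ker_mk', sup_eq_left.mpr hNH] at h3

noncomputable instance fixedPointsQuotientActionQuot (N : Subgroup G) [N.Normal] (Hs : Subgroup G) :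
    MulAction (G ⧸ N) (MulAction.fixedPoints ↥N (G ⧸ Hs)) :=
  fixedPointsQuotientAction N (G ⧸ Hs)

/-- For `N ≤ H`, the `G/N`-equivariant map `(G⧸H)^N → (G⧸N) ⧸ (H.map mk')`. -/
noncomputable def fixToQuot (N : Subgroup G) [N.Normal] (Hs : Subgroup G) :
    MulAction.fixedPoints ↥N (G ⧸ Hs) →[G ⧸ N] ((G ⧸ N) ⧸ Hs.map (QuotientGroup.mk' N)) where
  toFun x := qmap N Hs x.1
  map_smul' q x := by
    induction q using QuotientGroup.induction_on with
    | H g =>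
      show qmap N Hs ((((g : G ⧸ N)) • x : MulAction.fixedPoints ↥N (G ⧸ Hs)) : G ⧸ Hs) =
        ((g : G ⧸ N)) • qmap N Hs x.1
      exact (congrArg (qmap N Hs) (fixed_smul_val N g x)).trans (qmap_smul N Hs g x.1)

lemma fixToQuot_bijective (N : Subgroup G) [N.Normal] (Hs : Subgroup G) (hNH : N ≤ Hs) :
    Function.Bijective (fixToQuot N Hs) := by
  constructor
  · intro x y h
    exact Subtype.ext (qmap_injective N Hs hNH h)
  · intro q
    induction q using QuotientGroup.induction_on with
    | H gb =>
      induction gb using QuotientGroup.induction_on with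
      | H g => exact ⟨⟨((g : G) : G ⧸ Hs), mk_mem_fixedPoints N hNH g⟩, rfl⟩

/-- For `N ≤ H`, `Def (R[G/H^?]) ≅ R[(G/N)/(H/N)^?]`. -/
noncomputable def defFreeIso (R : Type) [CommRing R] (F : SubgroupFamily G)
    (N : Subgroup G) [N.Normal] (FQ : SubgroupFamily (G ⧸ N))
    (hFQ : ∀ Kb : Subgroup (G ⧸ N), FQ.mem Kb ↔ F.mem (Kb.comap (QuotientGroup.mk' N)))
    (H : OrbitObj F) (hNH : N ≤ H.1) :
    (defMod R F N FQ hFQ).obj (freeAt R H) ≅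
      freeAt R (⟨H.1.map (QuotientGroup.mk' N), (hFQ _).mpr (by
        rw [Subgroup.comap_map_eq, QuotientGroup.ker_mk', sup_eq_left.mpr hNH]
        exact H.2)⟩ : OrbitObj FQ) :=
  NatIso.ofComponents
    (fun Kb => (Finsupp.domLCongr (R := R) (M := R)
      ((fixHomEquiv N Kb.unop.1 (G ⧸ H.1)).trans
        (gsetHomCongr (fixToQuot N H.1) (fixToQuot_bijective N H.1 hNH) Kb.unop.1))).toModuleIso)
    (fun {Kb Lb} f => ModuleCat.hom_ext <|
      lmapDomain_domLCongr R
        ((fixHomEquiv N Kb.unop.1 (G ⧸ H.1)).trans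
          (gsetHomCongr (fixToQuot N H.1) (fixToQuot_bijective N H.1 hNH) Kb.unop.1))
        ((fixHomEquiv N Lb.unop.1 (G ⧸ H.1)).trans
          (gsetHomCongr (fixToQuot N H.1) (fixToQuot_bijective N H.1 hNH) Lb.unop.1))
        (fun u => u.comp (inducedQuotMap N f.unop)) (fun v => v.comp f.unop)
        (fun u => by
          show (fixToQuot N H.1).comp
              (fixHomEquiv N Lb.unop.1 (G ⧸ H.1) (u.comp (inducedQuotMap N f.unop)))
            = ((fixToQuot N H.1).comp
                (fixHomEquiv N Kb.unop.1 (G ⧸ H.1) u)).comp f.unop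
          rw [fixHomEquiv_comp]
          ext x
          rfl))

/-- For `N ≰ H`, `Def (R[G/H^?])` is zero. -/
lemma defFree_isZero (R : Type) [CommRing R] (F : SubgroupFamily G)
    (N : Subgroup G) [N.Normal] (FQ : SubgroupFamily (G ⧸ N))
    (hFQ : ∀ Kb : Subgroup (G ⧸ N), FQ.mem Kb ↔ F.mem (Kb.comap (QuotientGroup.mk' N)))
    (H : OrbitObj F) (hNH : ¬ N ≤ H.1) :
    IsZero ((defMod R F N FQ hFQ).obj (freeAt R H)) := by
  apply Functor.isZero
  intro Kb
  haveI : IsEmpty ((quotOrbitFunctor F N FQ hFQ).obj Kb.unop ⟶ H) := ⟨fun φ => hNH (by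
    intro m hm
    have hc : (orbitPt φ) * m * (orbitPt φ)⁻¹ ∈ N :=
      ‹N.Normal›.conj_mem m hm (orbitPt φ)
    have h2 := orbit_hom_mem φ _ (N_le_comap N Kb.unop.1 hc)
    have h3 : (orbitPt φ)⁻¹ * ((orbitPt φ) * m * (orbitPt φ)⁻¹) * (orbitPt φ) = m := by group
    rwa [h3] at h2)⟩
  haveI hsub : Subsingleton (((quotOrbitFunctor F N FQ hFQ).obj Kb.unop ⟶ H) →₀ R) :=
    inferInstance
  exact @ModuleCat.isZero_of_subsingleton R _ _ hsub

/-- Every `R[G/H^?]` is free. -/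
lemma isFreeMod_freeAt {R : Type} [CommRing R] {F : SubgroupFamily G} (B : OrbitObj F) :
    IsFreeMod (freeAt R B) := by
  refine ⟨PUnit, fun _ => B, ⟨?_⟩⟩
  exact
    { hom := Sigma.ι (fun _ : PUnit => freeAt R B) PUnit.unit
      inv := Sigma.desc (fun _ => 𝟙 _)
      hom_inv_id := by simp
      inv_hom_id := by
        apply Sigma.hom_ext
        intro b
        simp }

end Statement6Aux2

/-- [HPY 2014, Lemma on deflation].  Let `N ⊴ G` with `N ∈ 𝓕`.
For every `G`-set `X`, the deflation satisfies `Def^G_{G/N} R[X] ≅ R[X^N]`,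
the `N`-fixed points regarded as a `G/N`-set.  In particular, if `H ∈ 𝓕`
implies `HN ∈ 𝓕`, then `Def^G_{G/N}` sends projective modules to projective
modules. -/
theorem statement6 (G R : Type) [Group G] [Finite G] [CommRing R]
    (F : SubgroupFamily G) (N : Subgroup G) [N.Normal] (hNF : F.mem N)
    (FQ : SubgroupFamily (G ⧸ N))
    (hFQ : ∀ Kb : Subgroup (G ⧸ N), FQ.mem Kb ↔ F.mem (Kb.comap (QuotientGroup.mk' N))) :
    (∀ (X : Type) [MulAction G X],
      Nonempty ((defMod R F N FQ hFQ).obj (gsetMod R F X) ≅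
        gsetMod R FQ (MulAction.fixedPoints ↥N X))) ∧
    ((∀ H : Subgroup G, F.mem H → F.mem (H ⊔ N)) →
      ∀ M : OrbitMod R F, IsProjMod M → IsProjMod ((defMod R F N FQ hFQ).obj M)) := by
  constructor
  · intro X _
    exact ⟨defGsetIso R F N FQ hFQ X⟩
  · intro _ M hM
    obtain ⟨Fr, ⟨ι, b, ⟨isoFr⟩⟩, s, r, hsr⟩ := hM
    have hdata : ∀ i : ι, ∃ (T : OrbitObj FQ)
        (si : (defMod R F N FQ hFQ).obj (freeAt R (b i)) ⟶ freeAt R T)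
        (ri : freeAt R T ⟶ (defMod R F N FQ hFQ).obj (freeAt R (b i))),
        si ≫ ri = 𝟙 ((defMod R F N FQ hFQ).obj (freeAt R (b i))) := by
      intro i
      by_cases hN : N ≤ (b i).1
      · exact ⟨_, (defFreeIso R F N FQ hFQ (b i) hN).hom,
          (defFreeIso R F N FQ hFQ (b i) hN).inv, Iso.hom_inv_id _⟩
      · refine ⟨⟨⊥, (hFQ ⊥).mpr ?_⟩, 0, 0, ?_⟩
        · rw [MonoidHom.comap_bot, QuotientGroup.ker_mk']
          exact hNF
        · exact (defFree_isZero R F N FQ hFQ (b i) hN).eq_of_src _ _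
    choose T si ri hsri using hdata
    haveI : PreservesColimits (defMod R F N FQ hFQ) :=
      (Functor.ranAdjunction (quotOrbitFunctor F N FQ hFQ).op
        (ModuleCat.{0} R)).leftAdjoint_preservesColimits
    let E : (defMod R F N FQ hFQ).obj Fr ≅
        ∐ (fun i => (defMod R F N FQ hFQ).obj (freeAt R (b i))) :=
      (defMod R F N FQ hFQ).mapIso isoFr ≪≫
        preservesColimitIso (defMod R F N FQ hFQ)
          (Discrete.functor (fun i => freeAt R (b i))) ≪≫
        HasColimit.isoOfNatIso (Discrete.natIso (fun i => Iso.refl _))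
    have hmap : Limits.Sigma.map si ≫ Limits.Sigma.map ri
        = 𝟙 (∐ fun i => (defMod R F N FQ hFQ).obj (freeAt R (b i))) := by
      rw [Limits.Sigma.map_comp_map]
      have heq : (fun i => si i ≫ ri i)
          = fun i => 𝟙 ((defMod R F N FQ hFQ).obj (freeAt R (b i))) := funext hsri
      rw [heq, Limits.Sigma.map_id]
    refine ⟨∐ (fun i => freeAt R (T i)), ⟨ι, T, ⟨Iso.refl _⟩⟩,
      (defMod R F N FQ hFQ).map s ≫ E.hom ≫ Limits.Sigma.map si,
      Limits.Sigma.map ri ≫ E.inv ≫ (defMod R F N FQ hFQ).map r, ?_⟩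
    simp only [Category.assoc]
    rw [show Limits.Sigma.map si ≫ Limits.Sigma.map ri ≫ E.inv ≫ (defMod R F N FQ hFQ).map r
        = E.inv ≫ (defMod R F N FQ hFQ).map r from by
          rw [← Category.assoc, hmap, Category.id_comp]]
    rw [Iso.hom_inv_id_assoc, ← CategoryTheory.Functor.map_comp, hsr, CategoryTheory.Functor.map_id]
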